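/- Let f : ℝⁿ → Y be a mapping into a normed space Y and x̄ ∈ ℝⁿ. If 0 belongs to the interior of the Fréchet subdifferential ∂̂(y*∘f)(x̄) for some y* in the unit sphere S* of the dual Y*, then f is strongly metrically subregular at x̄. -/

import Mathlib

open Filter Topology Metric Set RealInnerProductSpace

/-- Strong metric subregularity of a single-valued map between normed spaces at `xb`. -/
def IsStronglyMetricallySubregularMap {X Y : Type*}
    [NormedAddCommGroup X] [NormedAddCommGroup Y] (f : X → Y) (xb : X) : Prop :=
  ∃ κ : ℝ, 0 ≤ κ ∧ ∃ r : ℝ, 0 < r ∧ ∀ x ∈ Metric.closedBall xb r,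
    ‖x - xb‖ ≤ κ * ‖f x - f xb‖

/-- The Fréchet subdifferential of a real-valued function `ψ : ℝⁿ → ℝ` at `xb`:
`{x* : liminf_{x→xb, x≠xb} (ψ x − ψ xb − ⟨x*, x − xb⟩)/‖x − xb‖ ≥ 0}`. -/
noncomputable def frechetSubdiffR {n : ℕ}
    (ψ : EuclideanSpace ℝ (Fin n) → ℝ) (xb : EuclideanSpace ℝ (Fin n)) :
    Set (EuclideanSpace ℝ (Fin n)) :=
  {p | (0 : EReal) ≤ Filter.liminf
    (fun x => (((ψ x - ψ xb - ⟪p, x - xb⟫) / ‖x - xb‖ : ℝ) : EReal)) (𝓝[≠] xb)}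

/-- If `0` belongs to the interior of the Fréchet subdifferential
`∂̂(y*∘f)(xb)` for some `y*` in the unit sphere of the dual of `Y`, then
`f : ℝⁿ → Y` is strongly metrically subregular at `xb`. -/
theorem strong_subreg_of_frechet_scalarization {n : ℕ} {Y : Type*}
    [NormedAddCommGroup Y] [NormedSpace ℝ Y]
    (f : EuclideanSpace ℝ (Fin n) → Y) (xb : EuclideanSpace ℝ (Fin n))
    (hq : ∃ q : StrongDual ℝ Y, ‖q‖ = 1 ∧
      (0 : EuclideanSpace ℝ (Fin n)) ∈
        interior (frechetSubdiffR (fun x => q (f x)) xb)) :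
    IsStronglyMetricallySubregularMap f xb := by
  obtain ⟨q, hq1, hq0⟩ := hq
  set ψ : EuclideanSpace ℝ (Fin n) → ℝ := fun x => q (f x) with hψ
  obtain ⟨ε, hε, hball⟩ := Metric.isOpen_iff.1 isOpen_interior _ hq0
  -- key bound for each small p
  have key : ∀ p : EuclideanSpace ℝ (Fin n), ‖p‖ < ε →
      ∀ᶠ x in 𝓝[≠] xb, ⟪p, x - xb⟫ - (ε/4) * ‖x - xb‖ ≤ ψ x - ψ xb := by
    intro p hp
    have hpmem : p ∈ frechetSubdiffR ψ xb :=
      interior_subset (hball (by simpa [Metric.mem_ball, dist_zero_right] using hp))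
    have hlt : ((-(ε/4) : ℝ) : EReal) <
        Filter.liminf (fun x => (((ψ x - ψ xb - ⟪p, x - xb⟫) / ‖x - xb‖ : ℝ) : EReal)) (𝓝[≠] xb) :=
      lt_of_lt_of_le (by exact_mod_cast (by linarith : (-(ε/4):ℝ) < 0)) hpmem
    have hev := Filter.eventually_lt_of_lt_liminf hlt
    filter_upwards [hev, self_mem_nhdsWithin] with x hx hxne
    rw [EReal.coe_lt_coe_iff] at hx
    have hnorm : 0 < ‖x - xb‖ := by rw [norm_pos_iff, sub_ne_zero]; exact hxne
    nlinarith [(lt_div_iff₀ hnorm).mp hx]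
  -- compactness of the unit sphere
  have hcpt : IsCompact (sphere (0 : EuclideanSpace ℝ (Fin n)) 1) := isCompact_sphere 0 1
  set U : sphere (0 : EuclideanSpace ℝ (Fin n)) 1 → Set (EuclideanSpace ℝ (Fin n)) :=
    fun u => {w | 1/2 < ⟪(u : EuclideanSpace ℝ (Fin n)), w⟫} with hU
  have hUopen : ∀ u, IsOpen (U u) := fun u =>
    isOpen_lt continuous_const (Continuous.inner continuous_const continuous_id)
  have hcover : sphere (0 : EuclideanSpace ℝ (Fin n)) 1 ⊆ ⋃ u, U u := by
    intro v hv
    refine Set.mem_iUnion.2 ⟨⟨v, hv⟩, ?_⟩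
    have : ‖v‖ = 1 := mem_sphere_zero_iff_norm.1 hv
    simp only [hU, Set.mem_setOf_eq, real_inner_self_eq_norm_sq, this]
    norm_num
  obtain ⟨t, ht⟩ := hcpt.elim_finite_subcover U hUopen hcover
  -- combine the finitely many eventual bounds
  have hev : ∀ᶠ x in 𝓝[≠] xb, ∀ i ∈ t,
      ⟪(3*ε/4) • (i : EuclideanSpace ℝ (Fin n)), x - xb⟫ - (ε/4) * ‖x - xb‖ ≤ ψ x - ψ xb := by
    rw [Filter.eventually_all_finset]
    intro i _
    apply key
    have h1 : ‖(i : EuclideanSpace ℝ (Fin n))‖ = 1 := mem_sphere_zero_iff_norm.1 i.2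
    have : ‖(3*ε/4) • (i : EuclideanSpace ℝ (Fin n))‖ = 3*ε/4 := by
      rw [norm_smul, h1, mul_one, Real.norm_eq_abs, abs_of_pos (by linarith)]
    rw [this]; linarith
  rw [eventually_nhdsWithin_iff] at hev
  obtain ⟨r, hr, hball'⟩ := Metric.eventually_nhds_iff.1 hev
  refine ⟨8/ε, by positivity, r/2, by positivity, ?_⟩
  intro x hx
  rcases eq_or_ne x xb with rfl | hne
  · simp
  have hdist : dist x xb < r := lt_of_le_of_lt (Metric.mem_closedBall.1 hx) (by linarith)
  have hP := hball' hdist (by simpa using hne)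
  have hnorm : 0 < ‖x - xb‖ := by rw [norm_pos_iff, sub_ne_zero]; exact hne
  set u : EuclideanSpace ℝ (Fin n) := ‖x - xb‖⁻¹ • (x - xb) with hudef
  have husphere : u ∈ sphere (0 : EuclideanSpace ℝ (Fin n)) 1 := by
    rw [mem_sphere_zero_iff_norm, hudef, norm_smul, Real.norm_eq_abs,
      abs_of_pos (inv_pos.2 hnorm), inv_mul_cancel₀ hnorm.ne']
  obtain ⟨i, hit, hui⟩ := Set.mem_iUnion₂.1 (ht husphere)
  have hui' : 1/2 < ⟪(i : EuclideanSpace ℝ (Fin n)), u⟫ := hui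
  have h2 : ⟪(i : EuclideanSpace ℝ (Fin n)), u⟫
      = ‖x - xb‖⁻¹ * ⟪(i : EuclideanSpace ℝ (Fin n)), x - xb⟫ := by
    rw [hudef, real_inner_smul_right]
  have h3 : ‖x - xb‖ / 2 < ⟪(i : EuclideanSpace ℝ (Fin n)), x - xb⟫ := by
    rw [h2] at hui'
    have h4 := mul_lt_mul_of_pos_left hui' hnorm
    rw [← mul_assoc, mul_inv_cancel₀ hnorm.ne', one_mul] at h4
    linarith
  have hPi := hP i hit
  rw [real_inner_smul_left] at hPi
  have hlow : (ε/8) * ‖x - xb‖ ≤ ψ x - ψ xb := by nlinarith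
  -- relate ψ to f
  have hbound : ψ x - ψ xb ≤ ‖f x - f xb‖ := by
    calc ψ x - ψ xb = q (f x - f xb) := by rw [hψ]; simp [map_sub]
    _ ≤ |q (f x - f xb)| := le_abs_self _
    _ ≤ ‖q‖ * ‖f x - f xb‖ := by
        rw [← Real.norm_eq_abs]; exact q.le_opNorm _
    _ = ‖f x - f xb‖ := by rw [hq1, one_mul]
  have h1 : (ε/8) * ‖x - xb‖ ≤ ‖f x - f xb‖ := le_trans hlow hbound
  have heq : ‖x - xb‖ = (8/ε) * ((ε/8) * ‖x - xb‖) := by field_simp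
  rw [heq]
  exact mul_le_mul_of_nonneg_left h1 (by positivity)
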